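/- Let A, B ∈ ℝ^{m×n} be nonzero matrices with rank(A + B) > 1, and fix (i, j) with a_{ij} ≠ 0. Define r_j(λ) = A^{(j)} + λB^{(j)} and c_i(λ)ᵀ = (a_{ij} + λb_{ij})⁻¹(A_{(i)} + λB_{(i)}) whenever a_{ij} + λb_{ij} ≠ 0. Then there exists λ* ∈ ℂ such that rank(A + λ*B) = 1 if and only if either (1) b_{ij} ≠ 0 and rank(A − (a_{ij}/b_{ij})B) = 1, or (2) there exists λ* with a_{ij} + λ*b_{ij} ≠ 0 and A + λ*B = r_j(λ*)c_i(λ*)ᵀ. -/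

import Mathlib

open Matrix

lemma aux_rank_one {K : Type*} [Field K] {m n : ℕ} (M : Matrix (Fin m) (Fin n) K) :
    M.rank = 1 ↔ M ≠ 0 ∧ ∀ s s' t t', M s t * M s' t' = M s t' * M s' t := by
  have colmem : ∀ t, (fun s => M s t) ∈ LinearMap.range M.mulVecLin := by
    intro t
    refine ⟨Pi.single t 1, ?_⟩
    simp [Matrix.mulVecLin_apply, Matrix.mulVec_single]
    rfl
  constructor
  · intro hr
    constructor
    · intro h0
      rw [h0, Matrix.rank_zero] at hr
      exact one_ne_zero hr.symm
    · have hprin : (LinearMap.range M.mulVecLin).IsPrincipal := by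
        rw [← Submodule.finrank_le_one_iff_isPrincipal]
        exact le_of_eq hr
      obtain ⟨w, hw⟩ := hprin
      intro s s' t t'
      have h1 := colmem t
      have h2 := colmem t'
      rw [hw, Submodule.mem_span_singleton] at h1 h2
      obtain ⟨c, hc⟩ := h1
      obtain ⟨c', hc'⟩ := h2
      have e1 : ∀ x, M x t = c * w x := fun x => (congrFun hc x).symm
      have e2 : ∀ x, M x t' = c' * w x := fun x => (congrFun hc' x).symm
      rw [e1, e1, e2, e2]; ring
  · rintro ⟨h0, hmin⟩
    have hne : ∃ a b, M a b ≠ 0 := by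
      by_contra h
      push_neg at h
      exact h0 (by ext a b; simpa using h a b)
    obtain ⟨a, b, hab⟩ := hne
    have hM : M = Matrix.vecMulVec (fun s => M s b) (fun t => (M a b)⁻¹ * M a t) := by
      ext s t
      rw [Matrix.vecMulVec_apply]
      field_simp
      exact hmin s a t b
    refine le_antisymm ?_ ?_
    · rw [hM]
      unfold Matrix.rank
      have hle : LinearMap.range (Matrix.vecMulVec (fun s => M s b)
          (fun t => (M a b)⁻¹ * M a t)).mulVecLin ≤ Submodule.span K {fun s => M s b} := by
        rintro _ ⟨x, rfl⟩
        rw [Submodule.mem_span_singleton]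
        refine ⟨∑ t, ((M a b)⁻¹ * M a t) * x t, ?_⟩
        ext s
        simp [Matrix.mulVecLin_apply, Matrix.mulVec, Matrix.vecMulVec_apply, dotProduct,
          Finset.sum_mul, Finset.mul_sum]
        exact Finset.sum_congr rfl (fun t _ => by ring)
      refine le_trans (Submodule.finrank_mono hle) ?_
      by_cases hu : (fun s => M s b) = (0 : Fin m → K)
      · rw [hu, Submodule.span_zero_singleton]
        simp
      · rw [finrank_span_singleton hu]
    · rw [Nat.one_le_iff_ne_zero]
      intro hz
      unfold Matrix.rank at hz
      rw [Submodule.finrank_eq_zero] at hz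
      have := colmem b
      rw [hz, Submodule.mem_bot] at this
      exact hab (by simpa using congrFun this a)

theorem stmt9 {m n : ℕ} (A B : Matrix (Fin m) (Fin n) ℝ)
    (hA : A ≠ 0) (hB : B ≠ 0) (hAB : 1 < (A + B).rank)
    (i : Fin m) (j : Fin n) (hij : A i j ≠ 0) :
    (∃ l : ℂ, (A.map (Complex.ofReal) + l • B.map (Complex.ofReal)).rank = 1) ↔
      (B i j ≠ 0 ∧ (A + (-(A i j / B i j)) • B).rank = 1) ∨
      (∃ l : ℂ,
        (A i j : ℂ) + l * (B i j : ℂ) ≠ 0 ∧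
        A.map (Complex.ofReal) + l • B.map (Complex.ofReal) =
          Matrix.vecMulVec (fun s => (A s j : ℂ) + l * (B s j : ℂ))
            (fun t => ((A i j : ℂ) + l * (B i j : ℂ))⁻¹ * ((A i t : ℂ) + l * (B i t : ℂ)))) := by
  have hent : ∀ (l : ℂ) s t, (A.map (Complex.ofReal) + l • B.map (Complex.ofReal)) s t
      = (A s t : ℂ) + l * (B s t : ℂ) := by
    intro l s t
    simp [Matrix.map_apply, Matrix.add_apply, Matrix.smul_apply]
  constructor
  · rintro ⟨l, hl⟩
    rw [aux_rank_one] at hl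
    obtain ⟨h0, hmin⟩ := hl
    by_cases hc : (A i j : ℂ) + l * (B i j : ℂ) = 0
    · left
      have hb : B i j ≠ 0 := by
        intro h
        rw [h] at hc
        push_cast at hc
        simp at hc
        exact hij hc
      have hbC : (B i j : ℂ) ≠ 0 := by exact_mod_cast hb
      have hl0 : l = ((-(A i j / B i j) : ℝ) : ℂ) := by
        push_cast
        field_simp
        linear_combination hc
      have hmapent : ∀ s t, (((A + (-(A i j / B i j)) • B) s t : ℝ) : ℂ)
          = (A.map (Complex.ofReal) + l • B.map (Complex.ofReal)) s t := by
        intro s t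
        rw [hent, hl0]
        simp [Matrix.add_apply, Matrix.smul_apply]
      refine ⟨hb, ?_⟩
      rw [aux_rank_one]
      constructor
      · intro hN0
        apply h0
        ext s t
        have := hmapent s t
        rw [hN0] at this
        simpa using this.symm
      · intro s s' t t'
        have h := hmin s s' t t'
        rw [← hmapent s t, ← hmapent s' t', ← hmapent s t', ← hmapent s' t] at h
        exact_mod_cast h
    · right
      refine ⟨l, hc, ?_⟩
      ext s t
      rw [Matrix.vecMulVec_apply, hent]
      have h := hmin s i t j
      rw [hent, hent, hent, hent] at h
      field_simp
      linear_combination h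
  · rintro (⟨hb, hr⟩ | ⟨l, hl, heq⟩)
    · refine ⟨((-(A i j / B i j) : ℝ) : ℂ), ?_⟩
      rw [aux_rank_one] at hr ⊢
      obtain ⟨h0, hmin⟩ := hr
      have hmapent : ∀ s t, (((A + (-(A i j / B i j)) • B) s t : ℝ) : ℂ)
          = (A.map (Complex.ofReal) + ((-(A i j / B i j) : ℝ) : ℂ) • B.map (Complex.ofReal)) s t := by
        intro s t
        rw [hent]
        simp [Matrix.add_apply, Matrix.smul_apply]
      constructor
      · intro hM0
        apply h0
        ext s t
        have := hmapent s t
        rw [hM0] at this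
        have h2 : (((A + (-(A i j / B i j)) • B) s t : ℝ) : ℂ) = 0 := by simpa using this
        exact_mod_cast h2
      · intro s s' t t'
        rw [← hmapent s t, ← hmapent s' t', ← hmapent s t', ← hmapent s' t]
        exact_mod_cast hmin s s' t t'
    · refine ⟨l, ?_⟩
      rw [aux_rank_one]
      constructor
      · intro hM0
        apply hl
        have := hent l i j
        rw [hM0] at this
        simpa using this.symm
      · intro s s' t t'
        rw [heq]
        simp only [Matrix.vecMulVec_apply]
        ring
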